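/- Let G be a finite connected simple graph on n vertices with maximum degree at most d (d ≥ 1), whose shortest-path metric dist_G has diameter at most Δ, and let s ≥ 1 be an integer. Then there exist a finite metric space N satisfying the four-point condition with |N| ≤ n·d^s and a surjective non-contractive multi-embedding f : N → (V(G), dist_G) with path distortion at most 2 + Δ/s. -/

import Mathlib

/-- A metric space satisfying the four-point condition (a tree metric). -/
def FourPointCond (X : Type*) [MetricSpace X] : Prop :=
  ∀ x y z w : X, dist x y + dist z w ≤ max (dist x z + dist y w) (dist x w + dist y z)

/-- The length of a path (finite sequence of points) in a metric space. -/
noncomputable def pathLength {X : Type*} [MetricSpace X] (p : List X) : ℝ :=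
  (List.zipWith dist p p.tail).sum

/-- The length of a path of vertices of a graph `G` with respect to the shortest-path
metric `dist_G`. -/
noncomputable def graphPathLength {V : Type*} (G : SimpleGraph V) (p : List V) : ℝ :=
  (List.zipWith (fun a b => (G.dist a b : ℝ)) p p.tail).sum

/-- A multi-embedding `f : T → V(G)`, non-contractive for `dist_G`, has path distortion
at most `α` with respect to `dist_G`. -/
def GraphPathDistortionLE {T V : Type*} [MetricSpace T] (G : SimpleGraph V)
    (f : T → V) (α : ℝ) : Prop :=
  ∀ p : List V, ∃ p' : List T, p'.map f = p ∧ pathLength p' ≤ α * graphPathLength G p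

set_option linter.unusedSectionVars false

namespace Prop11


open List

variable {V : Type*}

section LCP
variable [DecidableEq V]

/-- Length of the longest common prefix of two lists. -/
def lcp : List V → List V → ℕ
  | a :: x, b :: y => if a = b then lcp x y + 1 else 0
  | _, _ => 0

@[simp] lemma lcp_nil_left (y : List V) : lcp [] y = 0 := by cases y <;> rfl
@[simp] lemma lcp_nil_right (x : List V) : lcp x [] = 0 := by cases x <;> rfl

lemma lcp_cons (a b : V) (x y : List V) :
    lcp (a :: x) (b :: y) = if a = b then lcp x y + 1 else 0 := rfl

lemma lcp_comm : ∀ x y : List V, lcp x y = lcp y x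
  | [], y => by simp
  | x, [] => by simp
  | a :: x, b :: y => by
      rcases eq_or_ne a b with h | h
      · subst h; simp [lcp_cons, lcp_comm x y]
      · simp [lcp_cons, h, Ne.symm h]

lemma lcp_le_length_left : ∀ x y : List V, lcp x y ≤ x.length
  | [], y => by simp
  | x, [] => by simp
  | a :: x, b :: y => by
      rcases eq_or_ne a b with h | h
      · simpa [lcp_cons, h] using lcp_le_length_left x y
      · simp [lcp_cons, h]

lemma lcp_le_length_right (x y : List V) : lcp x y ≤ y.length := by
  rw [lcp_comm]; exact lcp_le_length_left y x

@[simp] lemma lcp_self : ∀ x : List V, lcp x x = x.length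
  | [] => by simp
  | a :: x => by simp [lcp_cons, lcp_self x]

lemma min_lcp_le : ∀ x y z : List V, min (lcp x y) (lcp y z) ≤ lcp x z
  | [], y, z => by simp
  | x, [], z => by simp
  | x, y, [] => by simp
  | a :: x, b :: y, c :: z => by
      rcases eq_or_ne a b with hab | hab
      · rcases eq_or_ne b c with hbc | hbc
        · subst hab; subst hbc
          have := min_lcp_le x y z
          simp only [lcp_cons, if_true, eq_self_iff_true]
          omega
        · simp [lcp_cons, hbc]
      · simp [lcp_cons, hab]

lemma take_lcp_eq : ∀ x y : List V, x.take (lcp x y) = y.take (lcp x y)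
  | [], y => by simp
  | x, [] => by simp
  | a :: x, b :: y => by
      rcases eq_or_ne a b with h | h
      · subst h; simp [lcp_cons, take_lcp_eq x y]
      · simp [lcp_cons, h]

lemma eq_of_lcp_eq_length {x y : List V} (hx : lcp x y = x.length)
    (hy : lcp x y = y.length) : x = y := by
  have h1 : x = x.take (lcp x y) := by rw [hx, take_length]
  have h2 : y = y.take (lcp x y) := by rw [hy, take_length]
  exact h1.trans ((take_lcp_eq x y).trans h2.symm)

lemma lcp_append : ∀ (t x y : List V), lcp (t ++ x) (t ++ y) = t.length + lcp x y
  | [], x, y => by simp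
  | a :: t, x, y => by simp [lcp_cons, lcp_append t x y]; omega

end LCP

/-- Abstract "meet" four-point lemma. -/
lemma meet_four_point {α : Type*} (M : α → α → ℝ)
    (hsymm : ∀ a b, M a b = M b a)
    (hmin : ∀ a b c, min (M a b) (M b c) ≤ M a c)
    (x y z w : α) :
    min (M x z + M y w) (M x w + M y z) ≤ M x y + M z w := by
  by_contra hcon
  push_neg at hcon
  rw [lt_min_iff] at hcon
  obtain ⟨hA, hB⟩ := hcon
  have h1 := hmin x z y
  have h2 := hmin x w y
  have h3 := hmin z x w
  have h4 := hmin z y w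
  rw [hsymm z y] at h1
  rw [hsymm w y] at h2
  rw [hsymm z x] at h3
  rw [hsymm z y] at h4
  rcases min_le_iff.mp h1 with h1' | h1' <;>
  rcases min_le_iff.mp h2 with h2' | h2' <;>
  rcases min_le_iff.mp h3 with h3' | h3' <;>
  rcases min_le_iff.mp h4 with h4' | h4' <;>
  linarith


section Chains
variable [Fintype V] [DecidableEq V] (G : SimpleGraph V) [DecidableRel G.Adj]

/-- All nonempty lists that are walks in `G` (newest vertex first) of length `≤ k`. -/
def chains : ℕ → Finset (List V)
  | 0 => ∅
  | k + 1 =>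
      (Finset.univ.image fun v => [v]) ∪
        (chains k).biUnion fun l =>
          (match l.head? with
            | some a => G.neighborFinset a
            | none => ∅).image fun w => w :: l

lemma chains_sound : ∀ (k : ℕ) (l : List V), l ∈ chains G k →
    l ≠ [] ∧ l.Chain' G.Adj ∧ l.length ≤ k
  | 0, l => by simp [chains]
  | k + 1, l => by
      intro hl
      rw [chains, Finset.mem_union] at hl
      rcases hl with hl | hl
      · obtain ⟨v, -, rfl⟩ := Finset.mem_image.mp hl
        exact ⟨by simp, List.isChain_singleton _, by simp⟩
      · obtain ⟨t, ht, hl⟩ := Finset.mem_biUnion.mp hl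
        obtain ⟨hne, hch, hlen⟩ := chains_sound k t ht
        obtain ⟨a, t', rfl⟩ : ∃ a t', t = a :: t' := by
          cases t with
          | nil => exact absurd rfl hne
          | cons a t' => exact ⟨a, t', rfl⟩
        simp only [List.head?_cons] at hl
        obtain ⟨w, hw, rfl⟩ := Finset.mem_image.mp hl
        rw [SimpleGraph.mem_neighborFinset] at hw
        refine ⟨by simp, List.isChain_cons_cons.mpr ⟨hw.symm, hch⟩, by simpa using Nat.succ_le_succ hlen⟩

lemma chains_complete : ∀ (k : ℕ) (l : List V), l ≠ [] → l.Chain' G.Adj →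
    l.length ≤ k → l ∈ chains G k
  | 0, l, hne, _, hlen => by
      cases l with
      | nil => exact absurd rfl hne
      | cons a t => simp at hlen
  | k + 1, l, hne, hch, hlen => by
      rw [chains, Finset.mem_union]
      match l with
      | [a] => exact Or.inl (Finset.mem_image.mpr ⟨a, Finset.mem_univ a, rfl⟩)
      | a :: b :: t =>
          right
          obtain ⟨hab, hch'⟩ := List.isChain_cons_cons.mp hch
          refine Finset.mem_biUnion.mpr ⟨b :: t, chains_complete k (b :: t) (by simp) hch'
            (by simpa using Nat.le_of_succ_le_succ hlen), ?_⟩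
          simp only [List.head?_cons]
          exact Finset.mem_image.mpr ⟨a, (SimpleGraph.mem_neighborFinset G b a).mpr hab.symm, rfl⟩

lemma chains_card_le {d : ℕ} (hdeg : ∀ v : V, G.degree v ≤ d) :
    ∀ k : ℕ, (chains G k).card ≤ Fintype.card V * ∑ j ∈ Finset.range k, d ^ j
  | 0 => by simp [chains]
  | k + 1 => by
      rw [chains]
      have h1 : ((Finset.univ.image fun v : V => [v])).card ≤ Fintype.card V :=
        Finset.card_image_le.trans (by simp)
      have h2 : ((chains G k).biUnion fun l =>
          (match l.head? with
            | some a => G.neighborFinset a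
            | none => (∅ : Finset V)).image fun w => w :: l).card ≤ (chains G k).card * d := by
        refine (Finset.card_biUnion_le).trans ?_
        calc ∑ l ∈ chains G k, ((match l.head? with
              | some a => G.neighborFinset a
              | none => (∅ : Finset V)).image fun w => w :: l).card
            ≤ ∑ _l ∈ chains G k, d := by
              refine Finset.sum_le_sum fun l _ => Finset.card_image_le.trans ?_
              cases hl : l.head? with
              | none => simp
              | some a => simpa using hdeg a
          _ = (chains G k).card * d := Finset.sum_const_nat fun _ _ => rfl
      refine (Finset.card_union_le _ _).trans ?_
      have IH := chains_card_le hdeg k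
      have hsum : ∑ j ∈ Finset.range (k + 1), d ^ j
          = 1 + d * ∑ j ∈ Finset.range k, d ^ j := by
        rw [Finset.sum_range_succ', Finset.mul_sum]
        simp [pow_succ, mul_comm, Nat.add_comm]
      have h3 : (chains G k).card * d ≤ (Fintype.card V * ∑ j ∈ Finset.range k, d ^ j) * d :=
        Nat.mul_le_mul_right d IH
      rw [hsum]
      have : Fintype.card V * (1 + d * ∑ j ∈ Finset.range k, d ^ j)
          = Fintype.card V + (Fintype.card V * ∑ j ∈ Finset.range k, d ^ j) * d := by ring
      rw [this]
      omega

lemma geom_sum_le_pow {d : ℕ} (hd : 2 ≤ d) : ∀ s : ℕ, ∑ j ∈ Finset.range s, d ^ j ≤ d ^ s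
  | 0 => by simp
  | s + 1 => by
      rw [Finset.sum_range_succ, pow_succ]
      have := geom_sum_le_pow hd s
      have h2 : d ^ s * 2 ≤ d ^ s * d := Nat.mul_le_mul_left _ hd
      omega

end Chains

section TreeMetric
variable [DecidableEq V]

/-- height transform -/
noncomputable def gfun (P : ℝ) (t : ℕ) : ℝ := if t = 0 then 0 else (t : ℝ) - 1 + P / 2

lemma gfun_nonneg {P : ℝ} (hP : 0 ≤ P) (t : ℕ) : 0 ≤ gfun P t := by
  unfold gfun
  split
  · rfl
  · rename_i h
    have : (1 : ℝ) ≤ (t : ℝ) := by exact_mod_cast Nat.one_le_iff_ne_zero.mpr h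
    linarith

lemma gfun_mono {P : ℝ} (hP : 0 ≤ P) : Monotone (gfun P) := by
  intro a b hab
  unfold gfun
  rcases eq_or_ne a 0 with ha | ha
  · have h0 : gfun P a = 0 := by simp [gfun, ha]
    rw [show (if a = 0 then (0:ℝ) else (a : ℝ) - 1 + P / 2) = gfun P a from rfl, h0]
    exact gfun_nonneg hP b
  · have hb : b ≠ 0 := by omega
    simp only [if_neg ha, if_neg hb]
    have : (a : ℝ) ≤ (b : ℝ) := by exact_mod_cast hab
    linarith

/-- the "meet height" of two walk-lists (newest vertex first). -/
noncomputable def mval (P : ℝ) (x y : List V) : ℝ := gfun P (lcp x.reverse y.reverse)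

/-- the height of a walk-list. -/
noncomputable def hgt (P : ℝ) (x : List V) : ℝ := (x.length : ℝ) - 1 + P / 2

/-- the tree distance between two walk-lists. -/
noncomputable def dval (P : ℝ) (x y : List V) : ℝ := hgt P x + hgt P y - 2 * mval P x y

lemma hgt_eq_gfun {P : ℝ} {x : List V} (hx : x ≠ []) : hgt P x = gfun P x.length := by
  have : x.length ≠ 0 := by simpa using hx
  simp [hgt, gfun, this]

lemma mval_comm (P : ℝ) (x y : List V) : mval P x y = mval P y x := by
  rw [mval, mval, lcp_comm]

lemma mval_self {P : ℝ} {x : List V} (hx : x ≠ []) : mval P x x = hgt P x := by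
  rw [mval, lcp_self, length_reverse, hgt_eq_gfun hx]

lemma mval_nonneg {P : ℝ} (hP : 0 ≤ P) (x y : List V) : 0 ≤ mval P x y :=
  gfun_nonneg hP _

lemma mval_le_hgt_right {P : ℝ} (hP : 0 ≤ P) (x : List V) {y : List V} (hy : y ≠ []) :
    mval P x y ≤ hgt P y := by
  rw [hgt_eq_gfun hy, mval]
  exact gfun_mono hP ((lcp_le_length_right _ _).trans_eq length_reverse)

lemma mval_le_hgt_left {P : ℝ} (hP : 0 ≤ P) {x : List V} (y : List V) (hx : x ≠ []) :
    mval P x y ≤ hgt P x := by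
  rw [mval_comm]; exact mval_le_hgt_right hP y hx

lemma mval_min {P : ℝ} (hP : 0 ≤ P) (x y z : List V) :
    min (mval P x y) (mval P y z) ≤ mval P x z := by
  have h := min_lcp_le x.reverse y.reverse z.reverse
  have := gfun_mono hP h
  calc min (mval P x y) (mval P y z)
      = gfun P (min (lcp x.reverse y.reverse) (lcp y.reverse z.reverse)) :=
        ((gfun_mono hP).map_min).symm
    _ ≤ mval P x z := this

lemma dval_self {P : ℝ} {x : List V} (hx : x ≠ []) : dval P x x = 0 := by
  rw [dval, mval_self hx]; ring

lemma dval_comm (P : ℝ) (x y : List V) : dval P x y = dval P y x := by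
  rw [dval, dval, mval_comm]; ring

lemma dval_triangle {P : ℝ} (hP : 0 ≤ P) (x z : List V) {y : List V} (hy : y ≠ []) :
    dval P x z ≤ dval P x y + dval P y z := by
  have h1 := mval_min hP x y z
  have h2 := mval_le_hgt_right hP x hy
  have h3 := mval_le_hgt_left hP z hy
  rcases le_total (mval P x y) (mval P y z) with h | h
  · rw [min_eq_left h] at h1
    simp only [dval]; linarith
  · rw [min_eq_right h] at h1
    simp only [dval]; linarith

lemma one_le_length {x : List V} (hx : x ≠ []) : (1 : ℝ) ≤ (x.length : ℝ) := by
  exact_mod_cast Nat.one_le_iff_ne_zero.mpr (by simpa using hx)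

lemma dval_pos {P : ℝ} (hP : 1 ≤ P) {x y : List V} (hx : x ≠ []) (hy : y ≠ [])
    (hxy : x ≠ y) : 0 < dval P x y := by
  have hxl := one_le_length hx
  have hyl := one_le_length hy
  rcases eq_or_ne (lcp x.reverse y.reverse) 0 with h | h
  · rw [dval, hgt, hgt, mval, h, show gfun P 0 = 0 from by simp [gfun]]
    linarith
  · have hj1 : lcp x.reverse y.reverse ≤ x.length :=
      (lcp_le_length_left _ _).trans_eq length_reverse
    have hj2 : lcp x.reverse y.reverse ≤ y.length :=
      (lcp_le_length_right _ _).trans_eq length_reverse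
    have hne : ¬(lcp x.reverse y.reverse = x.length ∧ lcp x.reverse y.reverse = y.length) := by
      rintro ⟨h1, h2⟩
      exact hxy (List.reverse_injective
        (eq_of_lcp_eq_length (by rw [h1, length_reverse]) (by rw [h2, length_reverse])))
    have hkey : 2 * lcp x.reverse y.reverse + 1 ≤ x.length + y.length := by omega
    rw [dval, hgt, hgt, mval, gfun, if_neg h]
    have : (2 * lcp x.reverse y.reverse + 1 : ℝ) ≤ (x.length : ℝ) + y.length := by
      exact_mod_cast hkey
    push_cast at this ⊢
    linarith

lemma dval_four_point {P : ℝ} (hP : 0 ≤ P) (x y z w : List V) :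
    dval P x y + dval P z w ≤ max (dval P x z + dval P y w) (dval P x w + dval P y z) := by
  have hm := meet_four_point (mval P) (mval_comm P) (fun a b c => mval_min hP a b c) x y z w
  rcases le_total (mval P x z + mval P y w) (mval P x w + mval P y z) with h | h
  · rw [min_eq_left h] at hm
    refine le_max_of_le_left ?_
    simp only [dval]; linarith
  · rw [min_eq_right h] at hm
    refine le_max_of_le_right ?_
    simp only [dval]; linarith

lemma dval_le_sum_hgt {P : ℝ} (hP : 0 ≤ P) (x y : List V) :
    dval P x y ≤ hgt P x + hgt P y := by
  have := mval_nonneg hP x y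
  rw [dval]; linarith

/-- distance to a suffix-extension -/
lemma dval_extension {P : ℝ} (x : List V) (hx : x ≠ []) (r : List V) :
    dval P x (r ++ x) = (r.length : ℝ) := by
  obtain ⟨a, t, rfl⟩ : ∃ a t, x = a :: t := by
    cases x with
    | nil => exact absurd rfl hx
    | cons a t => exact ⟨a, t, rfl⟩
  have hrev : (r ++ a :: t).reverse = t.reverse ++ (a :: r.reverse) := by
    simp
  have hrev2 : (a :: t).reverse = t.reverse ++ [a] := by simp
  have hl : lcp (a :: t).reverse (r ++ a :: t).reverse = t.length + 1 := by
    rw [hrev, hrev2, lcp_append, length_reverse, lcp_cons]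
    simp
  rw [dval, mval, hl, gfun, hgt, hgt]
  have : t.length + 1 ≠ 0 := by omega
  rw [if_neg this]
  push_cast
  simp only [List.length_append, List.length_cons]
  push_cast
  ring

end TreeMetric

section PathLen

lemma pathLength_nil {X : Type*} [MetricSpace X] : pathLength ([] : List X) = 0 := rfl

lemma pathLength_single {X : Type*} [MetricSpace X] (a : X) : pathLength [a] = 0 := rfl

lemma pathLength_cons₂ {X : Type*} [MetricSpace X] (a b : X) (l : List X) :
    pathLength (a :: b :: l) = dist a b + pathLength (b :: l) := rfl

lemma graphPathLength_nil {V : Type*} (G : SimpleGraph V) : graphPathLength G [] = 0 := rfl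

lemma graphPathLength_single {V : Type*} (G : SimpleGraph V) (a : V) :
    graphPathLength G [a] = 0 := rfl

lemma graphPathLength_cons₂ {V : Type*} (G : SimpleGraph V) (a b : V) (l : List V) :
    graphPathLength G (a :: b :: l) = (G.dist a b : ℝ) + graphPathLength G (b :: l) := rfl

lemma pathLength_map {X Y : Type*} [MetricSpace X] [MetricSpace Y] (f : X → Y)
    (hf : ∀ a b, dist (f a) (f b) = dist a b) : ∀ p : List X, pathLength (p.map f) = pathLength p
  | [] => rfl
  | [_] => rfl
  | a :: b :: t => by
      rw [List.map_cons, List.map_cons, pathLength_cons₂, hf,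
        show (f b :: t.map f) = (b :: t).map f from rfl, pathLength_map f hf (b :: t),
        pathLength_cons₂]

lemma graphPathLength_nonneg {V : Type*} (G : SimpleGraph V) :
    ∀ p : List V, 0 ≤ graphPathLength G p
  | [] => le_refl 0
  | [_] => le_refl 0
  | a :: b :: t => by
      rw [graphPathLength_cons₂]
      have := graphPathLength_nonneg G (b :: t)
      positivity

end PathLen

section Graph
variable [DecidableEq V] (G : SimpleGraph V)

lemma adj_dist_le_one {u v : V} (h : G.Adj u v) : G.dist u v ≤ 1 := by
  simpa using G.dist_le h.toWalk

lemma chain_dist_head (hG : G.Connected) :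
    ∀ (l : List V) (hl : l ≠ []) (_ : l.Chain' G.Adj) (i : ℕ) (hi : i < l.length),
      G.dist (l.head hl) l[i] ≤ i
  | [], hl, _, _, _ => absurd rfl hl
  | a :: t, _, hc, 0, _ => by simp
  | a :: t, _, hc, (i + 1), hi => by
      have hi' : i < t.length := by simpa using hi
      obtain ⟨b, t', rfl⟩ : ∃ b t', t = b :: t' := by
        cases t with
        | nil => simp at hi'
        | cons b t' => exact ⟨b, t', rfl⟩
      obtain ⟨hadj, hc'⟩ := List.isChain_cons_cons.mp hc
      have IH := chain_dist_head hG (b :: t') (by simp) hc' i hi'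
      calc G.dist a (b :: t')[i] ≤ G.dist a b + G.dist b (b :: t')[i] := hG.dist_triangle
    _ ≤ 1 + i := Nat.add_le_add (adj_dist_le_one G hadj) IH
    _ = i + 1 := Nat.add_comm 1 i

/-- non-contractivity at the list level -/
lemma dist_head_le_dval (hG : G.Connected) {P : ℝ}
    (hP1 : 1 ≤ P) (hP : ∀ a b : V, (G.dist a b : ℝ) ≤ P)
    {x y : List V} (hx : x ≠ []) (hy : y ≠ [])
    (hcx : x.Chain' G.Adj) (hcy : y.Chain' G.Adj) :
    (G.dist (x.head hx) (y.head hy) : ℝ) ≤ dval P x y := by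
  set j := lcp x.reverse y.reverse with hj
  rcases eq_or_ne j 0 with h0 | h0
  · rw [dval, mval, ← hj, h0, show gfun P 0 = 0 from by simp [gfun], hgt, hgt]
    have := hP (x.head hx) (y.head hy)
    have h1 := one_le_length hx
    have h2 := one_le_length hy
    linarith
  · have hj1 : j ≤ x.length := (lcp_le_length_left _ _).trans_eq length_reverse
    have hj2 : j ≤ y.length := (lcp_le_length_right _ _).trans_eq length_reverse
    have hjpos : 1 ≤ j := Nat.one_le_iff_ne_zero.mpr h0
    have htake := take_lcp_eq x.reverse y.reverse
    have hb1 : j - 1 < (x.reverse.take j).length := by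
      simp only [List.length_take, length_reverse]; omega
    have hb2 : j - 1 < (y.reverse.take j).length := by
      simp only [List.length_take, length_reverse]; omega
    have hmid0 : (x.reverse.take j)[j-1]'hb1 = (y.reverse.take j)[j-1]'hb2 := by
      simp only [← hj] at htake
      simp only [htake]
    have hmid1 : x.reverse[j-1]'(by simpa using by omega : j - 1 < x.reverse.length)
        = y.reverse[j-1]'(by simpa using by omega : j - 1 < y.reverse.length) := by
      simpa only [List.getElem_take] using hmid0
    have hmid : x[x.length - 1 - (j-1)]'(by omega) = y[y.length - 1 - (j-1)]'(by omega) := by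
      simpa only [List.getElem_reverse] using hmid1
    have d1 := chain_dist_head G hG x hx hcx (x.length - 1 - (j-1)) (by omega)
    have d2 := chain_dist_head G hG y hy hcy (y.length - 1 - (j-1)) (by omega)
    have dtot : G.dist (x.head hx) (y.head hy)
        ≤ (x.length - 1 - (j-1)) + (y.length - 1 - (j-1)) := by
      calc G.dist (x.head hx) (y.head hy)
          ≤ G.dist (x.head hx) (x[x.length - 1 - (j-1)]'(by omega))
            + G.dist (x[x.length - 1 - (j-1)]'(by omega)) (y.head hy) := hG.dist_triangle
        _ ≤ (x.length - 1 - (j-1)) + (y.length - 1 - (j-1)) := by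
            refine Nat.add_le_add d1 ?_
            rw [hmid, SimpleGraph.dist_comm]
            exact d2
    have hcast : ((x.length - 1 - (j-1) : ℕ) : ℝ) + ((y.length - 1 - (j-1) : ℕ) : ℝ)
        = ((x.length : ℝ) - j) + ((y.length : ℝ) - j) := by
      have e1 : x.length - 1 - (j-1) = x.length - j := by omega
      have e2 : y.length - 1 - (j-1) = y.length - j := by omega
      rw [e1, e2, Nat.cast_sub hj1, Nat.cast_sub hj2]
    have : (G.dist (x.head hx) (y.head hy) : ℝ)
        ≤ ((x.length - 1 - (j-1) : ℕ) : ℝ) + ((y.length - 1 - (j-1) : ℕ) : ℝ) := by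
      exact_mod_cast dtot
    rw [hcast] at this
    rw [dval, mval, ← hj, gfun, if_neg h0, hgt, hgt]
    linarith

end Graph

section Step
variable [DecidableEq V] (G : SimpleGraph V)

/-- the key step lemma: from a walk-list `x` and a target vertex `b`, find a next
walk-list ending (in head position) at `b`, with amortized cost control. -/
lemma step_lemma (hG : G.Connected) {Δ s : ℕ} (hs : 1 ≤ s)
    (hdiam : ∀ a b : V, G.dist a b ≤ Δ)
    (x : List V) (hx : x ≠ []) (hcx : x.Chain' G.Adj) (hlx : x.length ≤ s) (b : V) :
    ∃ x₁ : List V, (x₁ ≠ []) ∧ x₁.Chain' G.Adj ∧ x₁.length ≤ s ∧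
      (∀ h : x₁ ≠ [], x₁.head h = b) ∧
      dval ((Δ : ℝ) + 1) x x₁ + (1 + (Δ : ℝ) / s) * ((x₁.length : ℝ) - 1)
        ≤ (2 + (Δ : ℝ) / s) * (G.dist (x.head hx) b : ℝ)
          + (1 + (Δ : ℝ) / s) * ((x.length : ℝ) - 1) := by
  set P : ℝ := (Δ : ℝ) + 1 with hP
  set a := x.head hx with ha
  have hP0 : (0 : ℝ) ≤ P := by positivity
  have hs0 : (0 : ℝ) < s := by exact_mod_cast hs
  have hΔ0 : (0 : ℝ) ≤ (Δ : ℝ) := by positivity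
  rcases eq_or_ne a b with rfl | hne
  · refine ⟨x, hx, hcx, hlx, fun _ => rfl, ?_⟩
    rw [dval_self hx, SimpleGraph.dist_self]
    simp
  · have hg1 : 1 ≤ G.dist a b := hG.pos_dist_of_ne hne
    set g := G.dist a b with hgdef
    have hg1' : (1 : ℝ) ≤ (g : ℝ) := by exact_mod_cast hg1
    rcases le_or_gt (x.length + g) s with hcase | hcase
    · -- extend along a geodesic
      obtain ⟨p, hp⟩ := hG.exists_walk_length_eq_dist a b
      set q := p.reverse with hq
      have hqlen : q.length = g := by rw [hq, SimpleGraph.Walk.length_reverse, hp]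
      set r := q.support.dropLast with hr
      have hrlen : r.length = g := by
        rw [hr, List.length_dropLast, SimpleGraph.Walk.length_support, hqlen]
        omega
      have hne_r : r ≠ [] := by
        intro h
        rw [h] at hrlen
        simp at hrlen
        omega
      have hsupp : q.support = r ++ [a] := by
        have h0 := List.dropLast_append_getLast (q.support_ne_nil)
        rw [SimpleGraph.Walk.getLast_support] at h0
        rw [hr]
        exact h0.symm
      have hrhead : r.head hne_r = b := by
        have h1 : q.support.head? = some b := by rw [q.support_eq_cons]; rfl
        rw [hsupp, List.head?_append, List.head?_eq_head hne_r] at h1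
        simpa using h1
      refine ⟨r ++ x, ?_, ?_, ?_, ?_, ?_⟩
      · intro h
        rcases List.append_eq_nil_iff.mp h with ⟨-, h2⟩
        exact hx h2
      · -- Chain'
        have hxd : x = a :: x.tail := (List.cons_head_tail hx).symm
        have hrw : r ++ x = q.support ++ x.tail := by
          rw [hsupp]
          conv_lhs => rw [hxd]
          simp
        rw [hrw]
        refine List.IsChain.append q.isChain_adj_support (hcx.tail) ?_
        intro z hz y hy
        obtain rfl : a = z := by
          rw [hsupp, List.getLast?_append, List.getLast?_singleton] at hz
          simpa using hz
        have := (List.isChain_cons.mp (hxd ▸ hcx)).1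
        exact this y hy
      · rw [List.length_append, hrlen]
        omega
      · intro h
        rw [List.head_append_of_ne_nil hne_r, hrhead]
      · have hdv : dval P x (r ++ x) = (g : ℝ) := by
          rw [dval_extension x hx r, hrlen]
        refine le_of_eq ?_
        rw [hdv, List.length_append, hrlen]
        push_cast
        ring
    · -- refresh
      refine ⟨[b], by simp, List.isChain_singleton _, by simpa using hs, fun _ => rfl, ?_⟩
      have hd : dval P x [b] ≤ (x.length : ℝ) - 1 + P := by
        refine (dval_le_sum_hgt hP0 x [b]).trans_eq ?_
        rw [hgt, hgt]
        simp only [List.length_cons, List.length_nil]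
        push_cast
        ring
      have hk0 : (1 : ℝ) ≤ (x.length : ℝ) := one_le_length hx
      have hsk : (s : ℝ) ≤ (x.length : ℝ) - 1 + g := by
        have h1 : s + 1 ≤ x.length + g := hcase
        have h2 := (Nat.cast_le (α := ℝ)).mpr h1
        push_cast at h2
        linarith
      have hΔs : (Δ : ℝ) ≤ (Δ : ℝ) * ((x.length : ℝ) - 1 + g) / s := by
        rw [le_div_iff₀ hs0]
        nlinarith
      simp only [List.length_cons, List.length_nil]
      have expand : (Δ:ℝ) * ((x.length : ℝ) - 1 + g) / s
          = (Δ:ℝ)/s * ((x.length : ℝ) - 1) + (Δ:ℝ)/s * g := by ring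
      rw [expand] at hΔs
      rw [hP] at hd
      push_cast
      nlinarith [hd, hΔs, hg1', hk0]
end Step

section Construction
variable [Fintype V] [DecidableEq V]

lemma walk_construction (G : SimpleGraph V) [DecidableRel G.Adj]
    (hG : G.Connected) (Δ s : ℕ) (hdiam : ∀ a b : V, G.dist a b ≤ Δ) (hs : 1 ≤ s) :
    ∃ (_ : MetricSpace ↥(chains G s)) (f : ↥(chains G s) → V),
      FourPointCond ↥(chains G s) ∧ Function.Surjective f ∧
      (∀ u v : ↥(chains G s), (G.dist (f u) (f v) : ℝ) ≤ dist u v) ∧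
      GraphPathDistortionLE G f (2 + (Δ : ℝ) / (s : ℝ)) := by
  set T := ↥(chains G s) with hT
  set P : ℝ := (Δ : ℝ) + 1 with hPdef
  have hP0 : (0 : ℝ) ≤ P := by positivity
  have hP1 : (1 : ℝ) ≤ P := by
    rw [hPdef]
    have : (0:ℝ) ≤ (Δ : ℝ) := by positivity
    linarith
  have hs0 : (0 : ℝ) < (s : ℝ) := by exact_mod_cast hs
  have hPd : ∀ a b : V, (G.dist a b : ℝ) ≤ P := by
    intro a b
    have h1 : (G.dist a b : ℝ) ≤ (Δ : ℝ) := by exact_mod_cast hdiam a b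
    rw [hPdef]; linarith
  have hmem : ∀ w : T, w.1 ≠ [] ∧ w.1.Chain' G.Adj ∧ w.1.length ≤ s :=
    fun w => chains_sound G s w.1 w.2
  letI M : MetricSpace T :=
    { dist := fun x y => dval P x.1 y.1
      dist_self := fun x => dval_self (hmem x).1
      dist_comm := fun x y => dval_comm P x.1 y.1
      dist_triangle := fun x y z => dval_triangle hP0 x.1 z.1 (hmem y).1
      eq_of_dist_eq_zero := by
        intro x y h
        by_contra hne
        have hne' : x.1 ≠ y.1 := fun he => hne (Subtype.ext he)
        exact (dval_pos hP1 (hmem x).1 (hmem y).1 hne').ne' h }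
  have hdist : ∀ x y : T, dist x y = dval P x.1 y.1 := fun _ _ => rfl
  set f : T → V := fun w => w.1.head (hmem w).1 with hf
  have hfval : ∀ w : T, f w = w.1.head (hmem w).1 := fun _ => rfl
  refine ⟨M, f, ?_, ?_, ?_, ?_⟩
  · -- four point
    intro x y z w
    simp only [hdist]
    exact dval_four_point hP0 x.1 y.1 z.1 w.1
  · -- surjective
    intro v
    exact ⟨⟨[v], chains_complete G s [v] (by simp) (List.isChain_singleton _) (by simpa using hs)⟩, rfl⟩
  · -- non-contractive
    intro u v
    rw [hdist]
    exact dist_head_le_dval G hG hP1 hPd (hmem u).1 (hmem v).1 (hmem u).2.1 (hmem v).2.1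
  · -- path distortion
    set α : ℝ := 2 + (Δ : ℝ) / s with hα
    set c : ℝ := 1 + (Δ : ℝ) / s with hc
    have hc0 : (0 : ℝ) ≤ c := by
      rw [hc]
      have : (0:ℝ) ≤ (Δ:ℝ)/s := by positivity
      linarith
    have main : ∀ (rest : List V) (w : T), ∃ q : List T, q.map f = rest ∧
        pathLength (w :: q) ≤ α * graphPathLength G ((f w) :: rest)
          + c * ((w.1.length : ℝ) - 1) := by
      intro rest
      induction rest with
      | nil =>
          intro w
          refine ⟨[], rfl, ?_⟩
          rw [pathLength_single, graphPathLength_single]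
          have h1 := one_le_length (hmem w).1
          have h2 : (0:ℝ) ≤ c * ((w.1.length : ℝ) - 1) := mul_nonneg hc0 (by linarith)
          linarith
      | cons b rest ih =>
          intro w
          obtain ⟨x₁, h1, h2, h3, h4, h5⟩ :=
            step_lemma G hG hs hdiam w.1 (hmem w).1 (hmem w).2.1 (hmem w).2.2 b
          set w₁ : T := ⟨x₁, chains_complete G s x₁ h1 h2 h3⟩ with hw₁
          obtain ⟨q, hq, hlen⟩ := ih w₁
          have hfw₁ : f w₁ = b := h4 _
          refine ⟨w₁ :: q, by rw [List.map_cons, hq, hfw₁], ?_⟩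
          rw [pathLength_cons₂, graphPathLength_cons₂]
          rw [hfw₁] at hlen
          have hdd : dist w w₁ = dval P w.1 x₁ := rfl
          have hfw : f w = w.1.head (hmem w).1 := rfl
          rw [hdd, hfw]
          rw [hα, hc] at *
          linarith [hlen, h5]
    intro p
    cases p with
    | nil =>
        refine ⟨[], rfl, ?_⟩
        rw [pathLength_nil, graphPathLength_nil]
        simp
    | cons a rest =>
        set w₀ : T := ⟨[a], chains_complete G s [a] (by simp) (List.isChain_singleton _) (by simpa using hs)⟩
          with hw₀
        obtain ⟨q, hq, hlen⟩ := main rest w₀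
        have hfa : f w₀ = a := rfl
        refine ⟨w₀ :: q, by rw [List.map_cons, hq, hfa], ?_⟩
        rw [hfa] at hlen
        have hz : c * (((w₀.1).length : ℝ) - 1) = 0 := by
          show c * ((([a] : List V).length : ℝ) - 1) = 0
          norm_num
        linarith [hlen, hz]

end Construction

section Transport

lemma distortion_of_pointwise {X V : Type*} [MetricSpace X] (G : SimpleGraph V) (α : ℝ)
    (f : X → V) (h : V → X) (hfh : ∀ v, f (h v) = v)
    (hstep : ∀ a b : V, dist (h a) (h b) ≤ α * (G.dist a b : ℝ)) :
    GraphPathDistortionLE G f α := by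
  have aux : ∀ p : List V, pathLength (p.map h) ≤ α * graphPathLength G p := by
    intro p
    induction p with
    | nil => rw [List.map_nil, pathLength_nil, graphPathLength_nil, mul_zero]
    | cons a t ih =>
        cases t with
        | nil =>
            rw [List.map_cons, List.map_nil, pathLength_single, graphPathLength_single,
              mul_zero]
        | cons b t' =>
            rw [List.map_cons, List.map_cons, pathLength_cons₂, graphPathLength_cons₂,
              mul_add]
            have h2 : pathLength ((b :: t').map h) ≤ α * graphPathLength G (b :: t') := ih
            rw [List.map_cons] at h2
            have := hstep a b
            linarith
  intro p
  refine ⟨p.map h, ?_, aux p⟩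
  rw [List.map_map]
  have : f ∘ h = id := funext hfh
  rw [this, List.map_id]

lemma transport {V : Type*} (G : SimpleGraph V) (T : Type*) [MetricSpace T] [Fintype T]
    (f : T → V) (α : ℝ) (m : ℕ) (h4 : FourPointCond T) (hcard : Fintype.card T ≤ m)
    (hsurj : Function.Surjective f)
    (hnc : ∀ u v : T, (G.dist (f u) (f v) : ℝ) ≤ dist u v)
    (hdst : GraphPathDistortionLE G f α) :
    ∃ (N : Type) (_ : MetricSpace N) (_ : Fintype N) (g : N → V),
      FourPointCond N ∧ Fintype.card N ≤ m ∧ Function.Surjective g ∧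
      (∀ u v : N, (G.dist (g u) (g v) : ℝ) ≤ dist u v) ∧
      GraphPathDistortionLE G g α := by
  set n0 := Fintype.card T with hn0
  set e : Fin n0 ≃ T := (Fintype.equivFin T).symm with he
  letI : MetricSpace (Fin n0) := MetricSpace.induced e e.injective inferInstance
  have hde : ∀ i j : Fin n0, dist i j = dist (e i) (e j) := fun _ _ => rfl
  refine ⟨Fin n0, inferInstance, inferInstance, f ∘ e, ?_, ?_, ?_, ?_, ?_⟩
  · intro x y z w
    simp only [hde]
    exact h4 _ _ _ _
  · simpa using hcard
  · exact hsurj.comp e.surjective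
  · intro u v
    rw [hde]
    exact hnc _ _
  · intro p
    obtain ⟨p', hp', hlen⟩ := hdst p
    refine ⟨p'.map e.symm, ?_, ?_⟩
    · rw [List.map_map]
      have hcomp : (f ∘ e) ∘ e.symm = f := by
        funext t
        simp
      rw [hcomp, hp']
    · rw [pathLength_map e.symm (fun a b => by rw [hde]; simp)]
      exact hlen

end Transport

section Uniform
variable {W : Type*}

lemma uniform_construction (G : SimpleGraph W) (hG : G.Connected)
    (hd2 : ∀ a b : W, G.dist a b ≤ 2) (α : ℝ) (hα : 2 ≤ α) :
    ∃ (_ : MetricSpace W) (f : W → W),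
      FourPointCond W ∧ Function.Surjective f ∧
      (∀ u v : W, (G.dist (f u) (f v) : ℝ) ≤ dist u v) ∧
      GraphPathDistortionLE G f α := by
  classical
  set ud : W → W → ℝ := fun a b => if a = b then 0 else 2 with hud
  have hud_self : ∀ a, ud a a = 0 := fun a => if_pos rfl
  have hud_ne : ∀ {a b}, a ≠ b → ud a b = 2 := fun h => if_neg h
  have hud_comm : ∀ x y, ud x y = ud y x := by
    intro x y
    by_cases h : x = y
    · subst h; rfl
    · rw [hud_ne h, hud_ne (Ne.symm h)]
  have hud_nonneg : ∀ x y, 0 ≤ ud x y := by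
    intro x y
    by_cases h : x = y
    · rw [h, hud_self]
    · rw [hud_ne h]; norm_num
  have hud_le2 : ∀ x y, ud x y ≤ 2 := by
    intro x y
    by_cases h : x = y
    · rw [h, hud_self]; norm_num
    · rw [hud_ne h]
  have hud_tri : ∀ x y z, ud x z ≤ ud x y + ud y z := by
    intro x y z
    by_cases hxz : x = z
    · subst hxz
      rw [hud_self]
      have := hud_nonneg x y
      have := hud_nonneg y x
      linarith
    · rw [hud_ne hxz]
      by_cases hxy : x = y
      · subst hxy
        have hyz : x ≠ z := hxz
        rw [hud_self, hud_ne hyz]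
        norm_num
      · rw [hud_ne hxy]
        have := hud_nonneg y z
        linarith
  letI M : MetricSpace W :=
    { dist := ud
      dist_self := hud_self
      dist_comm := hud_comm
      dist_triangle := hud_tri
      eq_of_dist_eq_zero := by
        intro x y h
        by_contra hne
        have h' : ud x y = 0 := h
        rw [hud_ne hne] at h'
        norm_num at h' }
  have hdd : ∀ x y : W, dist x y = ud x y := fun _ _ => rfl
  refine ⟨M, id, ?_, Function.surjective_id, ?_, ?_⟩
  · intro x y z w
    simp only [hdd]
    rcases eq_or_ne x z with rfl | hxz
    · refine le_max_of_le_right (le_of_eq ?_)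
      rw [hud_comm x w, hud_comm y x, hud_comm x y]
      ring
    · rcases eq_or_ne y w with rfl | hyw
      · refine le_max_of_le_right (le_of_eq ?_)
        rw [hud_comm z y]
      · refine le_max_of_le_left ?_
        have e1 := hud_ne hxz
        have e2 := hud_ne hyw
        have := hud_le2 x y
        have := hud_le2 z w
        rw [e1, e2]
        linarith
  · intro u v
    simp only [id, hdd]
    rcases eq_or_ne u v with rfl | huv
    · rw [SimpleGraph.dist_self, hud_self]
      norm_num
    · rw [hud_ne huv]
      exact_mod_cast hd2 u v
  · refine distortion_of_pointwise G α id id (fun _ => rfl) ?_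
    intro a b
    rw [hdd]
    simp only [id_eq]
    rcases eq_or_ne a b with rfl | hab
    · rw [SimpleGraph.dist_self, hud_self]
      norm_num
    · rw [hud_ne hab]
      have h1 : 1 ≤ G.dist a b := hG.pos_dist_of_ne hab
      have h1' : (1:ℝ) ≤ (G.dist a b : ℝ) := by exact_mod_cast h1
      nlinarith

lemma dist_le_one_of_max_degree_one (G : SimpleGraph W) [DecidableEq W]
    [∀ v : W, Fintype (G.neighborSet v)]
    (hG : G.Connected) (hdeg : ∀ v : W, G.degree v ≤ 1) :
    ∀ a b : W, G.dist a b ≤ 1 := by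
  intro a b
  rcases eq_or_ne a b with rfl | hne
  · rw [SimpleGraph.dist_self]; norm_num
  obtain ⟨w⟩ := hG a b
  obtain ⟨p, hp⟩ : ∃ p : G.Walk a b, p.IsPath := ⟨w.toPath.1, w.toPath.2⟩
  cases p with
  | nil => exact absurd rfl hne
  | @cons _ c _ hadj q =>
      cases q with
      | nil => exact adj_dist_le_one G hadj
      | @cons _ e _ hadj2 q2 =>
          exfalso
          rw [SimpleGraph.Walk.cons_isPath_iff] at hp
          obtain ⟨hp1, hp2⟩ := hp
          have hae : a ≠ e := by
            intro h
            apply hp2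
            rw [SimpleGraph.Walk.support_cons, h]
            exact List.mem_cons_of_mem _ q2.start_mem_support
          have hsub : ({a, e} : Finset W) ⊆ G.neighborFinset c := by
            intro z hz
            rw [Finset.mem_insert, Finset.mem_singleton] at hz
            rw [SimpleGraph.mem_neighborFinset]
            rcases hz with rfl | rfl
            · exact hadj.symm
            · exact hadj2
          have h2 : 2 ≤ G.degree c := by
            rw [← Finset.card_pair hae]
            exact Finset.card_le_card hsub
          have := hdeg c
          omega

end Uniform





end Prop11

/-- Proposition 11: the shortest-path metric of a finite connected graph on `n` vertices
with maximum degree at most `d` and diameter at most `Δ` admits, for every integer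
`s ≥ 1`, a surjective non-contractive multi-embedding into a tree metric (a metric
satisfying the four-point condition) of size at most `n·dˢ` with path distortion at most
`2 + Δ/s`. -/
theorem graph_multiEmbedding_into_tree_metric
    {V : Type*} [Fintype V] (G : SimpleGraph V) [DecidableRel G.Adj] (hG : G.Connected)
    (n : ℕ) (hn : Fintype.card V = n)
    (d : ℕ) (hd : 1 ≤ d) (hdeg : ∀ v : V, G.degree v ≤ d)
    (Δ : ℕ) (hdiam : ∀ a b : V, G.dist a b ≤ Δ)
    (s : ℕ) (hs : 1 ≤ s) :
    ∃ (N : Type) (_ : MetricSpace N) (_ : Fintype N) (f : N → V),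
      FourPointCond N ∧
      Fintype.card N ≤ n * d ^ s ∧
      Function.Surjective f ∧
      (∀ u v : N, (G.dist (f u) (f v) : ℝ) ≤ dist u v) ∧
      GraphPathDistortionLE G f (2 + (Δ : ℝ) / (s : ℝ)) := by
  classical
  rcases lt_or_ge d 2 with hd1 | hd2
  · -- degree bound 1 : the graph has diameter at most 1, use a uniform metric
    have hdeg1 : ∀ v, G.degree v ≤ 1 := fun v => by have := hdeg v; omega
    have hle1 := Prop11.dist_le_one_of_max_degree_one G hG hdeg1
    have hle2 : ∀ a b : V, G.dist a b ≤ 2 := fun a b => (hle1 a b).trans (by norm_num)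
    have hα : (2:ℝ) ≤ 2 + (Δ:ℝ)/(s:ℝ) := by
      have : (0:ℝ) ≤ (Δ:ℝ)/(s:ℝ) := by positivity
      linarith
    obtain ⟨M, f, h4, hsurj, hnc, hdist⟩ := Prop11.uniform_construction G hG hle2 _ hα
    letI := M
    have hcard : Fintype.card V ≤ n * d ^ s := by
      have h1 : 1 ≤ d ^ s := Nat.one_le_pow _ _ (by omega)
      calc Fintype.card V = n := hn
        _ = n * 1 := (mul_one n).symm
        _ ≤ n * d ^ s := Nat.mul_le_mul_left _ h1
    exact Prop11.transport G V f _ (n * d ^ s) h4 hcard hsurj hnc hdist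
  · -- main construction
    obtain ⟨M, f, h4, hsurj, hnc, hdist⟩ := Prop11.walk_construction G hG Δ s hdiam hs
    letI := M
    have hcard : Fintype.card ↥(Prop11.chains G s) ≤ n * d ^ s := by
      rw [Fintype.card_coe]
      calc (Prop11.chains G s).card
          ≤ Fintype.card V * ∑ j ∈ Finset.range s, d ^ j := Prop11.chains_card_le G hdeg s
        _ ≤ Fintype.card V * d ^ s :=
            Nat.mul_le_mul_left _ (Prop11.geom_sum_le_pow hd2 s)
        _ = n * d ^ s := by rw [hn]
    exact Prop11.transport G _ f _ (n * d ^ s) h4 hcard hsurj hnc hdist
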